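/- For all nonnegative real numbers x, y, z with x + y + z = 1, we have 3x + y + 3z^3 ≥ 2/3 (equivalently x + y/3 + z^3 ≥ 2/9). -/
import Mathlib


theorem simplex_ineq_two_ninths (x y z : ℝ) (hx : 0 ≤ x) (hy : 0 ≤ y) (hz : 0 ≤ z)
    (hsum : x + y + z = 1) : 3 * x + y + 3 * z ^ 3 ≥ 2 / 3 := by nlinarith [sq_nonneg (z - 1/3), mul_nonneg hz (sq_nonneg (z - 1/3)), hy, hx]
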